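/- For any distinct $b,b'\in B$ (so $b,b'>0$, $\sum_i b_i=\sum_i b'_i=1$, $b\ne b'$), neither $P_{\mathrm{SCF}}(b)\subseteq P_{\mathrm{SCF}}(b')$ nor $P_{\mathrm{SCF}}(b')\subseteq P_{\mathrm{SCF}}(b)$ holds; i.e., the formulations $P_{\mathrm{SCF}}(b)$ and $P_{\mathrm{SCF}}(b')$ are incomparable. -/

import Mathlib

/-- Weight of a directed cycle given by nodes `v 0, …, v (k-1)` with arcs
`(v i, v ((i+1) % k))`. -/
def cycleSum {α : Type} (c : α → α → ℝ) (k : ℕ) (v : ℕ → α) : ℝ :=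
  ∑ i ∈ Finset.range k, c (v i) (v ((i + 1) % k))

/-- A directed cycle: at least two distinct nodes `v 0, …, v (k-1)`. -/
def IsCycle {α : Type} (k : ℕ) (v : ℕ → α) : Prop :=
  2 ≤ k ∧ ∀ i < k, ∀ j < k, v i = v j → i = j

/-- A directed cycle avoiding node `0` (the paper's node 1), i.e. a member of `𝒞₁`. -/
def IsCycle1 {n : ℕ} (k : ℕ) (v : ℕ → Fin (n + 1)) : Prop :=
  IsCycle k v ∧ ∀ i < k, v i ≠ 0

/-- The (restricted) assignment polytope `P_AP`. -/
def memPAP {n : ℕ} (x : Fin (n + 1) → Fin (n + 1) → ℝ) : Prop :=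
  (∀ i j : Fin (n + 1), i ≠ j → 0 ≤ x i j ∧ x i j ≤ 1) ∧
  (∀ i : Fin (n + 1), ∑ j ∈ Finset.univ.erase i, x i j = 1) ∧
  (∀ i : Fin (n + 1), ∑ j ∈ Finset.univ.erase i, x j i = 1)

/-- Membership in `P_SCF(b)`: `x ∈ P_AP` satisfying the cut inequalities
`∑_{ij ∈ δ⁺(S)} x_{ij} ≥ ∑_{i ∈ S} b_i` for all `S ⊆ N₁` with `|S| ≥ 2`. -/
def memPSCF {n : ℕ} (b : Fin (n + 1) → ℝ) (x : Fin (n + 1) → Fin (n + 1) → ℝ) : Prop :=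
  memPAP x ∧ ∀ S : Finset (Fin (n + 1)), (0 : Fin (n + 1)) ∉ S → 2 ≤ S.card →
    ∑ i ∈ S, b i ≤ ∑ i ∈ S, ∑ j ∈ Sᶜ, x i j

namespace SCF


def c1 {n : ℕ} (i : Fin (n+1)) : Fin (n+1) :=
  ⟨(i.val + 1) % (n+1), Nat.mod_lt _ (Nat.succ_pos n)⟩

def c2 {n : ℕ} (i : Fin (n+1)) : Fin (n+1) :=
  ⟨(if i.val = 1 then 2 else if i.val = 2 then 1 else if i.val = n then 0
     else if i.val = 0 then 3 else i.val + 1) % (n+1), Nat.mod_lt _ (Nat.succ_pos n)⟩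

lemma c1_val {n : ℕ} (i : Fin (n+1)) :
    (c1 i).val = if i.val = n then 0 else i.val + 1 := by
  have hi := i.isLt
  simp only [c1]
  split_ifs with h
  · simp [h]
  · exact Nat.mod_eq_of_lt (by omega)

lemma c2_val {n : ℕ} (hn : 3 ≤ n) (i : Fin (n+1)) :
    (c2 i).val = if i.val = 1 then 2 else if i.val = 2 then 1 else if i.val = n then 0
     else if i.val = 0 then 3 else i.val + 1 := by
  have hi := i.isLt
  simp only [c2]
  exact Nat.mod_eq_of_lt (by split_ifs <;> omega)

lemma c1_ne {n : ℕ} (hn : 3 ≤ n) (i : Fin (n+1)) : c1 i ≠ i := by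
  intro h
  have := congrArg Fin.val h
  rw [c1_val] at this
  have hi := i.isLt
  split_ifs at this <;> omega

lemma c2_ne {n : ℕ} (hn : 3 ≤ n) (i : Fin (n+1)) : c2 i ≠ i := by
  intro h
  have := congrArg Fin.val h
  rw [c2_val hn] at this
  have hi := i.isLt
  split_ifs at this <;> omega

lemma c1_inj {n : ℕ} (hn : 3 ≤ n) : Function.Injective (c1 (n := n)) := by
  intro a b h
  have := congrArg Fin.val h
  rw [c1_val, c1_val] at this
  have ha := a.isLt; have hb := b.isLt
  apply Fin.ext
  split_ifs at this <;> omega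

lemma c2_inj {n : ℕ} (hn : 3 ≤ n) : Function.Injective (c2 (n := n)) := by
  intro a b h
  have := congrArg Fin.val h
  rw [c2_val hn, c2_val hn] at this
  have ha := a.isLt; have hb := b.isLt
  apply Fin.ext
  split_ifs at this <;> omega

lemma c1_escape {n : ℕ} (hn : 3 ≤ n) (S : Finset (Fin (n+1)))
    (h0 : (0 : Fin (n+1)) ∉ S) (hne : S.Nonempty) : ∃ i ∈ S, c1 i ∉ S := by
  by_contra hcl
  push_neg at hcl
  have aux : ∀ k : ℕ, ∀ i : Fin (n+1), i ∈ S → n - i.val ≤ k → (0 : Fin (n+1)) ∈ S := by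
    intro k
    induction k with
    | zero =>
      intro i hi hk
      have hin : i.val = n := by have := i.isLt; omega
      have : c1 i = 0 := by apply Fin.ext; rw [c1_val]; simp [hin]
      rw [← this]; exact hcl i hi
    | succ k ih =>
      intro i hi hk
      by_cases hin : i.val = n
      · have : c1 i = 0 := by apply Fin.ext; rw [c1_val]; simp [hin]
        rw [← this]; exact hcl i hi
      · have hv : (c1 i).val = i.val + 1 := by rw [c1_val]; simp [hin]
        exact ih (c1 i) (hcl i hi) (by have := i.isLt; omega)
  obtain ⟨i, hi⟩ := hne
  exact h0 (aux n i hi (by omega))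

lemma c2_zero {n : ℕ} (hn : 3 ≤ n) (i : Fin (n+1)) (h1 : i.val ≠ 1) (h2 : i.val ≠ 2)
    (hin : i.val = n) : c2 i = 0 := by
  apply Fin.ext
  rw [c2_val hn, show ((0:Fin (n+1)).val = 0) from rfl]
  split_ifs <;> omega

lemma c2_escape {n : ℕ} (hn : 3 ≤ n) (S : Finset (Fin (n+1)))
    (h0 : (0 : Fin (n+1)) ∉ S) (hne : ∃ i ∈ S, i.val ≠ 1 ∧ i.val ≠ 2) :
    ∃ i ∈ S, c2 i ∉ S := by
  by_contra hcl
  push_neg at hcl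
  have aux : ∀ k : ℕ, ∀ i : Fin (n+1), i ∈ S → i.val ≠ 1 → i.val ≠ 2 →
      n - i.val ≤ k → (0 : Fin (n+1)) ∈ S := by
    intro k
    induction k with
    | zero =>
      intro i hi h1 h2 hk
      have hin : i.val = n := by have := i.isLt; omega
      have : c2 i = 0 := c2_zero hn i h1 h2 hin
      rw [← this]; exact hcl i hi
    | succ k ih =>
      intro i hi h1 h2 hk
      have hi0 : i.val ≠ 0 := by
        intro h; apply h0; have : i = 0 := Fin.ext h; rwa [this] at hi
      by_cases hin : i.val = n
      · have : c2 i = 0 := c2_zero hn i h1 h2 hin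
        rw [← this]; exact hcl i hi
      · have hv : (c2 i).val = i.val + 1 := by rw [c2_val hn]; simp [h1, h2, hin, hi0]
        have hi3 : 3 ≤ i.val := by omega
        refine ih (c2 i) (hcl i hi) ?_ ?_ ?_ <;> · rw [hv]; first | omega | (have := i.isLt; omega)
  obtain ⟨i, hi, h1, h2⟩ := hne
  have hi0 : i.val ≠ 0 := by
    intro h; apply h0; have : i = 0 := Fin.ext h; rwa [this] at hi
  exact h0 (aux n i hi h1 h2 (by omega))


open Finset


lemma sum_ind_row {n : ℕ} (f : Fin (n+1) → Fin (n+1)) (hf : ∀ i, f i ≠ i) (w : ℝ)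
    (i : Fin (n+1)) :
    ∑ j ∈ Finset.univ.erase i, (if f i = j then w else 0) = w := by
  rw [Finset.sum_ite_eq]
  simp [Finset.mem_erase, hf i]

lemma sum_ind_col {n : ℕ} (f : Fin (n+1) → Fin (n+1)) (hinj : Function.Injective f)
    (hf : ∀ i, f i ≠ i) (w : ℝ) (i : Fin (n+1)) :
    ∑ j ∈ Finset.univ.erase i, (if f j = i then w else 0) = w := by
  obtain ⟨j₀, hj₀⟩ := (Finite.injective_iff_surjective.mp hinj) i
  have hji : j₀ ≠ i := by rintro rfl; exact hf j₀ hj₀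
  rw [Finset.sum_eq_single_of_mem j₀ (by simp [hji])]
  · simp [hj₀]
  · intro j _ hne
    have : f j ≠ i := fun h => hne (hinj (h.trans hj₀.symm))
    simp [this]

lemma sum_ind_cut {n : ℕ} (f : Fin (n+1) → Fin (n+1)) (S : Finset (Fin (n+1)))
    (i : Fin (n+1)) (w : ℝ) :
    ∑ j ∈ Sᶜ, (if f i = j then w else 0) = if f i ∈ S then 0 else w := by
  rw [Finset.sum_ite_eq]
  by_cases h : f i ∈ S <;> simp [h]

lemma cut_ge {n : ℕ} (f : Fin (n+1) → Fin (n+1)) (S : Finset (Fin (n+1)))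
    (i₀ : Fin (n+1)) (h₀ : i₀ ∈ S) (hesc : f i₀ ∉ S) (w : ℝ) (hw : 0 ≤ w) :
    w ≤ ∑ i ∈ S, ∑ j ∈ Sᶜ, (if f i = j then w else 0) := by
  have h1 : ∀ i, ∑ j ∈ Sᶜ, (if f i = j then w else 0) = if f i ∈ S then 0 else w :=
    fun i => sum_ind_cut f S i w
  simp_rw [h1]
  calc w = if f i₀ ∈ S then 0 else w := by simp [hesc]
  _ ≤ ∑ i ∈ S, if f i ∈ S then 0 else w := by
      refine Finset.single_le_sum (f := fun i => if f i ∈ S then 0 else w)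
        (fun i _ => ?_) h₀
      show 0 ≤ (if f i ∈ S then (0:ℝ) else w); split_ifs <;> simp [hw]


open Finset


lemma exists_pair {n : ℕ} (hn : 3 ≤ n) (b b' : Fin (n+1) → ℝ)
    (hbsum : ∑ i ∈ Finset.univ.erase 0, b i = 1)
    (hb'sum : ∑ i ∈ Finset.univ.erase 0, b' i = 1)
    (hne : ∃ i : Fin (n+1), i ≠ 0 ∧ b i ≠ b' i) :
    ∃ p q : Fin (n+1), p ≠ 0 ∧ q ≠ 0 ∧ p ≠ q ∧ b p + b q < b' p + b' q := by
  set η : Fin (n+1) → ℝ := fun i => b' i - b i with hη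
  set N : Finset (Fin (n+1)) := Finset.univ.erase 0 with hN
  have hsum : ∑ i ∈ N, η i = 0 := by
    simp only [hη, Finset.sum_sub_distrib, hbsum, hb'sum]; ring
  have hcardN : N.card = n := by
    simp [hN, Finset.card_erase_of_mem, Finset.card_univ]
  have hNne : N.Nonempty := Finset.card_pos.mp (by omega)
  obtain ⟨p, hpN, hpmax⟩ := Finset.exists_max_image N η hNne
  have hp0 : p ≠ 0 := (Finset.mem_erase.mp hpN).1
  -- η p > 0
  have hppos : 0 < η p := by
    by_contra h
    push_neg at h
    obtain ⟨i, hi0, hbi⟩ := hne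
    have hiN : i ∈ N := Finset.mem_erase.mpr ⟨hi0, Finset.mem_univ i⟩
    have hilt : η i < 0 := lt_of_le_of_ne (le_trans (hpmax i hiN) h) (sub_ne_zero.mpr (Ne.symm hbi))
    have : ∑ j ∈ N, η j < ∑ j ∈ N, (0:ℝ) :=
      Finset.sum_lt_sum (fun j hj => le_trans (hpmax j hj) h) ⟨i, hiN, hilt⟩
    simp [hsum] at this
  have hcard2 : 1 ≤ (N.erase p).card := by
    rw [Finset.card_erase_of_mem hpN]; omega
  obtain ⟨q, hqN, hqmax⟩ := Finset.exists_max_image (N.erase p) η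
    (Finset.card_pos.mp (by omega))
  have hqp : q ≠ p := (Finset.mem_erase.mp hqN).1
  have hq0 : q ≠ 0 := (Finset.mem_erase.mp (Finset.mem_erase.mp hqN).2).1
  have key : 0 < η p + η q := by
    by_contra h
    push_neg at h
    have hqneg : η q < 0 := by linarith
    have hT : ((N.erase p).erase q).Nonempty := by
      apply Finset.card_pos.mp
      rw [Finset.card_erase_of_mem hqN, Finset.card_erase_of_mem hpN]
      omega
    have hTneg : ∑ j ∈ (N.erase p).erase q, η j < 0 := by
      have := Finset.sum_lt_sum_of_nonempty hT
        (f := η) (g := fun _ => (0:ℝ))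
        (fun j hj => lt_of_le_of_lt (hqmax j (Finset.mem_of_mem_erase hj)) hqneg)
      simpa using this
    have e1 : η p + ∑ j ∈ N.erase p, η j = ∑ j ∈ N, η j := Finset.add_sum_erase N η hpN
    have e2 : η q + ∑ j ∈ (N.erase p).erase q, η j = ∑ j ∈ N.erase p, η j :=
      Finset.add_sum_erase (N.erase p) η hqN
    rw [hsum] at e1
    linarith
  exact ⟨p, q, hp0, hq0, Ne.symm hqp, by simp only [hη] at key; linarith⟩



set_option maxHeartbeats 1000000 in
lemma key {n : ℕ} (hn : 3 ≤ n) (b b' : Fin (n+1) → ℝ)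
    (hbpos : ∀ i : Fin (n+1), i ≠ 0 → 0 < b i)
    (hbsum : ∑ i ∈ Finset.univ.erase 0, b i = 1)
    (p q : Fin (n+1)) (hp : p ≠ 0) (hq : q ≠ 0) (hpq : p ≠ q)
    (hlt : b p + b q < b' p + b' q) :
    ∃ x : Fin (n+1) → Fin (n+1) → ℝ, memPSCF b x ∧ ¬ memPSCF b' x := by
  classical
  set e1 : Fin (n+1) := ⟨1, by omega⟩ with he1
  set e2 : Fin (n+1) := ⟨2, by omega⟩ with he2
  set e3 : Fin (n+1) := ⟨3, by omega⟩ with he3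
  have h0val : (0 : Fin (n+1)).val = 0 := rfl
  have h01 : (0 : Fin (n+1)) ≠ e1 := by intro h; have := congrArg Fin.val h; simp [he1, h0val] at this
  have h02 : (0 : Fin (n+1)) ≠ e2 := by intro h; have := congrArg Fin.val h; simp [he2, h0val] at this
  have h12 : e1 ≠ e2 := by intro h; have := congrArg Fin.val h; simp [he1, he2] at this
  have h13 : e1 ≠ e3 := by intro h; have := congrArg Fin.val h; simp [he1, he3] at this
  have h23 : e2 ≠ e3 := by intro h; have := congrArg Fin.val h; simp [he2, he3] at this
  -- the permutation
  set q' : Fin (n+1) := Equiv.swap e1 p q with hq'def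
  have hq'0 : q' ≠ 0 := by
    intro h
    apply hq
    have := congrArg (Equiv.swap e1 p) h
    rwa [Equiv.swap_apply_self, Equiv.swap_apply_of_ne_of_ne h01 (Ne.symm hp)] at this
  have hq'1 : q' ≠ e1 := by
    intro h
    apply hpq
    have := congrArg (Equiv.swap e1 p) h
    rw [Equiv.swap_apply_self, Equiv.swap_apply_left] at this
    exact this.symm
  set π : Equiv.Perm (Fin (n+1)) := (Equiv.swap e2 q').trans (Equiv.swap e1 p) with hπdef
  have hπ0 : π 0 = 0 := by
    show Equiv.swap e1 p (Equiv.swap e2 q' 0) = 0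
    rw [Equiv.swap_apply_of_ne_of_ne h02 (Ne.symm hq'0),
      Equiv.swap_apply_of_ne_of_ne h01 (Ne.symm hp)]
  have hπ1 : π e1 = p := by
    show Equiv.swap e1 p (Equiv.swap e2 q' e1) = p
    rw [Equiv.swap_apply_of_ne_of_ne h12 (Ne.symm hq'1), Equiv.swap_apply_left]
  have hπ2 : π e2 = q := by
    show Equiv.swap e1 p (Equiv.swap e2 q' e2) = q
    rw [Equiv.swap_apply_left, hq'def, Equiv.swap_apply_self]
  -- values of c1, c2 at e1, e2
  have hc1e1 : c1 e1 = e2 := by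
    apply Fin.ext; rw [c1_val]; simp only [he1, he2]; split_ifs <;> omega
  have hc1e2 : c1 e2 = e3 := by
    apply Fin.ext; rw [c1_val]; simp only [he2, he3]; split_ifs <;> omega
  have hc2e1 : c2 e1 = e2 := by
    apply Fin.ext; rw [c2_val hn]; simp only [he1, he2]; split_ifs <;> omega
  have hc2e2 : c2 e2 = e1 := by
    apply Fin.ext; rw [c2_val hn]; simp only [he1, he2]; split_ifs <;> omega
  -- conjugated maps
  set f1 : Fin (n+1) → Fin (n+1) := fun i => π (c1 (π.symm i)) with hf1def
  set f2 : Fin (n+1) → Fin (n+1) := fun i => π (c2 (π.symm i)) with hf2def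
  have hf1ne : ∀ i, f1 i ≠ i := by
    intro i h
    apply c1_ne hn (π.symm i)
    apply π.injective
    rw [Equiv.apply_symm_apply]
    exact h
  have hf2ne : ∀ i, f2 i ≠ i := by
    intro i h
    apply c2_ne hn (π.symm i)
    apply π.injective
    rw [Equiv.apply_symm_apply]
    exact h
  have hf1inj : Function.Injective f1 := by
    intro a b h
    exact π.symm.injective (c1_inj hn (π.injective h))
  have hf2inj : Function.Injective f2 := by
    intro a b h
    exact π.symm.injective (c2_inj hn (π.injective h))
  have hsymp : π.symm p = e1 := by rw [Equiv.symm_apply_eq]; exact hπ1.symm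
  have hsymq : π.symm q = e2 := by rw [Equiv.symm_apply_eq]; exact hπ2.symm
  have hf1p : f1 p = q := by rw [hf1def]; simp only [hsymp, hc1e1, hπ2]
  have hf2p : f2 p = q := by rw [hf2def]; simp only [hsymp, hc2e1, hπ2]
  have hf2q : f2 q = p := by rw [hf2def]; simp only [hsymq, hc2e2, hπ1]
  have hf1q : f1 q = π e3 := by rw [hf1def]; simp only [hsymq, hc1e2]
  have hπ3p : π e3 ≠ p := by
    intro h; rw [← hπ1] at h; exact h13 (π.injective h).symm
  have hπ3q : π e3 ≠ q := by
    intro h; rw [← hπ2] at h; exact h23 (π.injective h).symm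
  -- the point
  set t : ℝ := b p + b q with htdef
  have ht0 : 0 < t := add_pos (hbpos p hp) (hbpos q hq)
  have hpairsub : ({p, q} : Finset (Fin (n+1))) ⊆ Finset.univ.erase 0 := by
    intro i hi
    rcases Finset.mem_insert.mp hi with h | h
    · subst h; exact Finset.mem_erase.mpr ⟨hp, Finset.mem_univ _⟩
    · rw [Finset.mem_singleton] at h; subst h
      exact Finset.mem_erase.mpr ⟨hq, Finset.mem_univ _⟩
  have ht1 : t ≤ 1 := by
    rw [htdef, ← Finset.sum_pair hpq, ← hbsum]
    apply Finset.sum_le_sum_of_subset_of_nonneg hpairsub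
    intro i hi _
    exact (hbpos i (Finset.mem_erase.mp hi).1).le
  set x : Fin (n+1) → Fin (n+1) → ℝ :=
    fun i j => (if f1 i = j then t else 0) + (if f2 i = j then 1 - t else 0) with hxdef
  -- membership in P_AP
  have hAP : memPAP x := by
    refine ⟨fun i j _ => ?_, fun i => ?_, fun i => ?_⟩
    · constructor <;> · simp only [hxdef]; split_ifs <;> linarith
    · simp only [hxdef, Finset.sum_add_distrib, sum_ind_row f1 hf1ne, sum_ind_row f2 hf2ne]
      ring
    · simp only [hxdef, Finset.sum_add_distrib, sum_ind_col f1 hf1inj hf1ne,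
        sum_ind_col f2 hf2inj hf2ne]
      ring
  -- image transfer
  have himg : ∀ (S : Finset (Fin (n+1))) (z : Fin (n+1)),
      z ∈ S.image (fun a => π.symm a) ↔ π z ∈ S := by
    intro S z
    simp only [Finset.mem_image]
    constructor
    · rintro ⟨a, ha, rfl⟩; rwa [Equiv.apply_symm_apply]
    · intro h; exact ⟨π z, h, Equiv.symm_apply_apply π z⟩
  refine ⟨x, ⟨hAP, ?_⟩, ?_⟩
  · -- the cut inequalities for b
    intro S h0S hcardS
    set S' : Finset (Fin (n+1)) := S.image (fun a => π.symm a) with hS'def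
    have h0' : (0 : Fin (n+1)) ∉ S' := by
      rw [hS'def]; intro h; rw [himg, hπ0] at h; exact h0S h
    have hS'card : S'.card = S.card := Finset.card_image_of_injective _ π.symm.injective
    have hS'ne : S'.Nonempty := Finset.card_pos.mp (by omega)
    obtain ⟨z1, hz1S, hz1⟩ := c1_escape hn S' h0' hS'ne
    have hz1' : π z1 ∈ S := (himg S z1).mp hz1S
    have hesc1 : f1 (π z1) ∉ S := by
      have he : f1 (π z1) = π (c1 z1) := by
        rw [hf1def]; simp only [Equiv.symm_apply_apply]
      rw [he]; intro h; exact hz1 ((himg S (c1 z1)).mpr h)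
    have hA : t ≤ ∑ i ∈ S, ∑ j ∈ Sᶜ, (if f1 i = j then t else 0) :=
      cut_ge f1 S (π z1) hz1' hesc1 t ht0.le
    have hB0 : 0 ≤ ∑ i ∈ S, ∑ j ∈ Sᶜ, (if f2 i = j then 1 - t else 0) :=
      Finset.sum_nonneg fun i _ => Finset.sum_nonneg fun j _ => by split_ifs <;> linarith
    have hsplit : ∑ i ∈ S, ∑ j ∈ Sᶜ, x i j =
        (∑ i ∈ S, ∑ j ∈ Sᶜ, if f1 i = j then t else 0) +
        ∑ i ∈ S, ∑ j ∈ Sᶜ, if f2 i = j then 1 - t else 0 := by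
      simp only [hxdef, Finset.sum_add_distrib]
    by_cases hS : S = {p, q}
    · subst hS
      rw [Finset.sum_pair hpq, hsplit, htdef]
      linarith
    · have hne2 : ∃ z ∈ S', z.val ≠ 1 ∧ z.val ≠ 2 := by
        by_contra hcon
        push_neg at hcon
        apply hS
        have hsub : S' ⊆ {e1, e2} := by
          intro z hz
          rcases eq_or_ne z.val 1 with h | h
          · have : z = e1 := Fin.ext h
            simp [this]
          · have : z = e2 := Fin.ext (hcon z hz h)
            simp [this]
        have hS'eq : S' = {e1, e2} :=
          Finset.eq_of_subset_of_card_le hsub (by rw [Finset.card_pair h12]; omega)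
        ext a
        have hmem : a ∈ S ↔ π.symm a ∈ S' := by
          rw [hS'def, himg, Equiv.apply_symm_apply]
        rw [hmem, hS'eq]
        simp only [Finset.mem_insert, Finset.mem_singleton]
        constructor
        · rintro (h | h)
          · left; rw [← hπ1, ← h, Equiv.apply_symm_apply]
          · right; rw [← hπ2, ← h, Equiv.apply_symm_apply]
        · rintro (h | h)
          · left; rw [h, ← hπ1, Equiv.symm_apply_apply]
          · right; rw [h, ← hπ2, Equiv.symm_apply_apply]
      obtain ⟨z2, hz2S, hz2⟩ := c2_escape hn S' h0' hne2
      have hz2' : π z2 ∈ S := (himg S z2).mp hz2S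
      have hesc2 : f2 (π z2) ∉ S := by
        have he : f2 (π z2) = π (c2 z2) := by
          rw [hf2def]; simp only [Equiv.symm_apply_apply]
        rw [he]; intro h; exact hz2 ((himg S (c2 z2)).mpr h)
      have hB : 1 - t ≤ ∑ i ∈ S, ∑ j ∈ Sᶜ, (if f2 i = j then 1 - t else 0) :=
        cut_ge f2 S (π z2) hz2' hesc2 (1 - t) (by linarith)
      have hble : ∑ i ∈ S, b i ≤ 1 := by
        rw [← hbsum]
        apply Finset.sum_le_sum_of_subset_of_nonneg
        · intro i hi
          exact Finset.mem_erase.mpr ⟨fun h => h0S (h ▸ hi), Finset.mem_univ _⟩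
        · intro i hi _
          exact (hbpos i (Finset.mem_erase.mp hi).1).le
      rw [hsplit]
      linarith
  · -- violation for b'
    rintro ⟨-, hcut⟩
    have h0pq : (0 : Fin (n+1)) ∉ ({p, q} : Finset (Fin (n+1))) := by
      simp only [Finset.mem_insert, Finset.mem_singleton]
      push_neg
      exact ⟨fun h => hp h.symm, fun h => hq h.symm⟩
    have hcardpq : 2 ≤ ({p, q} : Finset (Fin (n+1))).card := (Finset.card_pair hpq).ge
    have hviol := hcut {p, q} h0pq hcardpq
    rw [Finset.sum_pair hpq, Finset.sum_pair hpq] at hviol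
    have hmemq : q ∈ ({p, q} : Finset (Fin (n+1))) := by simp
    have hmemp : p ∈ ({p, q} : Finset (Fin (n+1))) := by simp
    have hxp : ∑ j ∈ (({p, q} : Finset (Fin (n+1))))ᶜ, x p j = 0 := by
      simp only [hxdef, Finset.sum_add_distrib, sum_ind_cut]
      rw [hf1p, hf2p]
      simp [hmemq]
    have hxq : ∑ j ∈ (({p, q} : Finset (Fin (n+1))))ᶜ, x q j = t := by
      simp only [hxdef, Finset.sum_add_distrib, sum_ind_cut]
      rw [hf1q, hf2q]
      have hn3 : π e3 ∉ ({p, q} : Finset (Fin (n+1))) := by simp [hπ3p, hπ3q]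
      simp [hn3, hmemp]
    rw [hxp, hxq, htdef] at hviol
    linarith

end SCF

/-- Distinct `b, b' ∈ B` always give incomparable formulations `P_SCF(b)`, `P_SCF(b')`. -/
theorem stmt_16 (n : ℕ) (hn : 4 ≤ n + 1)
    (b b' : Fin (n + 1) → ℝ)
    (hb : (∀ i : Fin (n + 1), i ≠ 0 → 0 < b i) ∧ ∑ i ∈ Finset.univ.erase 0, b i = 1)
    (hb' : (∀ i : Fin (n + 1), i ≠ 0 → 0 < b' i) ∧ ∑ i ∈ Finset.univ.erase 0, b' i = 1)
    (hne : ∃ i : Fin (n + 1), i ≠ 0 ∧ b i ≠ b' i) :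
    (∃ x : Fin (n + 1) → Fin (n + 1) → ℝ, memPSCF b x ∧ ¬ memPSCF b' x) ∧
    (∃ x : Fin (n + 1) → Fin (n + 1) → ℝ, memPSCF b' x ∧ ¬ memPSCF b x) := by
  have hn3 : 3 ≤ n := by omega
  constructor
  · obtain ⟨p, q, hp, hq, hpq, hlt⟩ := SCF.exists_pair hn3 b b' hb.2 hb'.2 hne
    exact SCF.key hn3 b b' hb.1 hb.2 p q hp hq hpq hlt
  · obtain ⟨p, q, hp, hq, hpq, hlt⟩ := SCF.exists_pair hn3 b' b hb'.2 hb.2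
      (by obtain ⟨i, hi0, hi⟩ := hne; exact ⟨i, hi0, hi.symm⟩)
    exact SCF.key hn3 b' b hb'.1 hb'.2 p q hp hq hpq hlt
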